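/- Assume all eight w_{ijk} are nonzero, and that H = 0, F_{·1·} = 0 and F_{1··} = 0. Then F_{0··} = 0 and F_{·0·} = 0, and there exists a nonzero complex number λ such that w_{ij1} = λ·w_{ij0} for all i,j ∈ {0,1} (so the two slices of the tensor are proportional). -/

import Mathlib

theorem stmt_7 (w000 w001 w010 w011 w100 w101 w110 w111 : ℂ)
    (h000 : w000 ≠ 0) (h001 : w001 ≠ 0) (h010 : w010 ≠ 0) (h011 : w011 ≠ 0)
    (h100 : w100 ≠ 0) (h101 : w101 ≠ 0) (h110 : w110 ≠ 0) (h111 : w111 ≠ 0)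
    (hH : ((w000 * w111 - w001 * w110) - (w010 * w101 - w011 * w100)) ^ 2
      - 4 * (w000 * w011 - w010 * w001) * (w100 * w111 - w110 * w101) = 0)
    (hFd1 : w010 * w111 - w110 * w011 = 0)
    (hF1d : w100 * w111 - w110 * w101 = 0) :
    w000 * w011 - w010 * w001 = 0
    ∧ w000 * w101 - w100 * w001 = 0
    ∧ ∃ l : ℂ, l ≠ 0 ∧ w001 = l * w000 ∧ w011 = l * w010 ∧
        w101 = l * w100 ∧ w111 = l * w110 := by
  set l : ℂ := w111 / w110 with hl
  have h4 : w111 = l * w110 := by rw [hl, div_mul_cancel₀ _ h110]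
  have h3 : w101 = l * w100 := by
    rw [hl, div_mul_eq_mul_div, eq_div_iff h110]
    linear_combination -hF1d
  have h2 : w011 = l * w010 := by
    rw [hl, div_mul_eq_mul_div, eq_div_iff h110]
    linear_combination -hFd1
  have hln : l ≠ 0 := by
    intro h
    exact h111 (by rw [h4, h, zero_mul])
  have h1 : w001 = l * w000 := by
    have key : (w110 * (l * w000 - w001)) ^ 2 = 0 := by
      rw [h2, h3, h4] at hH
      linear_combination hH
    have := pow_eq_zero_iff (n := 2) (by norm_num) |>.mp key
    have h5 : l * w000 - w001 = 0 := by
      rcases mul_eq_zero.mp this with h | h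
      · exact absurd h h110
      · exact h
    linear_combination -h5
  refine ⟨?_, ?_, l, hln, h1, h2, h3, h4⟩
  · rw [h1, h2]; ring
  · rw [h1, h3]; ring
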